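/- Let c : I → H be a C² curve on anti-de Sitter space H and λ : I → ℝ a C¹ function satisfying the Euler–Lagrange system ẍ₁ = λ̇x₄ + 2λẋ₄, ẍ₂ = −λ̇x₃ − 2λẋ₃, ẍ₃ = −λ̇x₂ − 2λẋ₂, ẍ₄ = λ̇x₁ + 2λẋ₁. If c is horizontal with respect to span{T,X} (γ ≡ 0), then the Lagrange multiplier λ is constant on I. -/

import Mathlib

open Real Set

noncomputable section

/-- Pseudo-Euclidean inner product of signature (2,2) on ℝ⁴. -/
def ip (x y : Fin 4 → ℝ) : ℝ :=
  -(x 0 * y 0) - x 1 * y 1 + x 2 * y 2 + x 3 * y 3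

/-- Anti-de Sitter space H = {x : ⟨x,x⟩ = -1}. -/
def AdS : Set (Fin 4 → ℝ) := {x | ip x x = -1}

/-- The vector field T(x) = (−x₂, x₁, x₄, −x₃). -/
def Tf (x : Fin 4 → ℝ) : Fin 4 → ℝ := ![-(x 1), x 0, x 3, -(x 2)]

/-- The vector field X(x) = (x₃, x₄, x₁, x₂). -/
def Xf (x : Fin 4 → ℝ) : Fin 4 → ℝ := ![x 2, x 3, x 0, x 1]

/-- The vector field Y(x) = (x₄, −x₃, −x₂, x₁). -/
def Yf (x : Fin 4 → ℝ) : Fin 4 → ℝ := ![x 3, -(x 2), -(x 1), x 0]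

/-- The normal vector field N(x) = x. -/
def Nf (x : Fin 4 → ℝ) : Fin 4 → ℝ := x

/-- α(s) = ⟨ċ(s), T(c(s))⟩. -/
def alphaC (c : ℝ → Fin 4 → ℝ) (s : ℝ) : ℝ := ip (deriv c s) (Tf (c s))

/-- β(s) = ⟨ċ(s), X(c(s))⟩. -/
def betaC (c : ℝ → Fin 4 → ℝ) (s : ℝ) : ℝ := ip (deriv c s) (Xf (c s))

/-- γ(s) = ⟨ċ(s), Y(c(s))⟩. -/
def gammaC (c : ℝ → Fin 4 → ℝ) (s : ℝ) : ℝ := ip (deriv c s) (Yf (c s))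

/-- along a C² horizontal (span{T,X}) solution on AdS of the
Euler–Lagrange system, the Lagrange multiplier λ is constant on I. -/
private lemma coordDeriv {c : ℝ → Fin 4 → ℝ} {x : ℝ} (h : DifferentiableAt ℝ c x)
    (i : Fin 4) : HasDerivAt (fun u => c u i) (deriv c x i) x :=
  (ContinuousLinearMap.proj (R := ℝ) (φ := fun _ : Fin 4 => ℝ) i).hasFDerivAt.comp_hasDerivAt x
    h.hasDerivAt

theorem lagrange_multiplier_constant (I : Set ℝ) (hI : I.OrdConnected)
    (c : ℝ → Fin 4 → ℝ) (lam : ℝ → ℝ)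
    (hc1 : ∀ s ∈ I, DifferentiableAt ℝ c s)
    (hc2 : ∀ s ∈ I, DifferentiableAt ℝ (deriv c) s)
    (hlam : ∀ s ∈ I, DifferentiableAt ℝ lam s)
    (hH : ∀ s ∈ I, c s ∈ AdS)
    (hhor : ∀ s ∈ I, gammaC c s = 0)
    (hEL1 : ∀ s ∈ I, deriv (deriv c) s 0
      = deriv lam s * c s 3 + 2 * lam s * deriv c s 3)
    (hEL2 : ∀ s ∈ I, deriv (deriv c) s 1
      = -(deriv lam s * c s 2) - 2 * lam s * deriv c s 2)
    (hEL3 : ∀ s ∈ I, deriv (deriv c) s 2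
      = -(deriv lam s * c s 1) - 2 * lam s * deriv c s 1)
    (hEL4 : ∀ s ∈ I, deriv (deriv c) s 3
      = deriv lam s * c s 0 + 2 * lam s * deriv c s 0) :
    ∀ s ∈ I, ∀ t ∈ I, lam s = lam t := by
  have key : ∀ a b : ℝ, a ∈ I → b ∈ I → a < b → lam b = lam a := by
    intro a b ha hb hab
    have hJI : Icc a b ⊆ I := hI.out ha hb
    have hud : UniqueDiffOn ℝ (Icc a b) := uniqueDiffOn_Icc hab
    have hder0 : ∀ x ∈ Icc a b, deriv lam x = 0 := by
      intro x hxJ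
      have hxI : x ∈ I := hJI hxJ
      have hca : ∀ i, HasDerivAt (fun u => c u i) (deriv c x i) x :=
        coordDeriv (hc1 x hxI)
      have hda : ∀ i, HasDerivAt (fun u => deriv c u i) (deriv (deriv c) x i) x :=
        coordDeriv (hc2 x hxI)
      -- the squared-norm function
      have hF : HasDerivAt
          (fun u => -(c u 0 * c u 0) - c u 1 * c u 1 + c u 2 * c u 2 + c u 3 * c u 3)
          (-(deriv c x 0 * c x 0 + c x 0 * deriv c x 0)
            - (deriv c x 1 * c x 1 + c x 1 * deriv c x 1)
            + (deriv c x 2 * c x 2 + c x 2 * deriv c x 2)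
            + (deriv c x 3 * c x 3 + c x 3 * deriv c x 3)) x :=
        ((((((hca 0).mul (hca 0)).neg.sub ((hca 1).mul (hca 1))).add
          ((hca 2).mul (hca 2))).add ((hca 3).mul (hca 3))))
      have hFeq : -(deriv c x 0 * c x 0 + c x 0 * deriv c x 0)
            - (deriv c x 1 * c x 1 + c x 1 * deriv c x 1)
            + (deriv c x 2 * c x 2 + c x 2 * deriv c x 2)
            + (deriv c x 3 * c x 3 + c x 3 * deriv c x 3) = 0 := by
        have h1 := (hF.hasDerivWithinAt).derivWithin (hud x hxJ)
        have h2 : derivWithin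
            (fun u => -(c u 0 * c u 0) - c u 1 * c u 1 + c u 2 * c u 2 + c u 3 * c u 3)
            (Icc a b) x = derivWithin (fun _ : ℝ => (-1 : ℝ)) (Icc a b) x := by
          apply derivWithin_congr
          · intro y hy
            have := hH y (hJI hy)
            simpa [AdS, ip] using this
          · have := hH x hxI
            simpa [AdS, ip] using this
        rw [h2, derivWithin_fun_const, Pi.zero_apply] at h1
        linarith [h1]
      -- the gamma function
      have hG : HasDerivAt
          (fun u => -(deriv c u 0 * c u 3) + deriv c u 1 * c u 2
            - deriv c u 2 * c u 1 + deriv c u 3 * c u 0)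
          (-(deriv (deriv c) x 0 * c x 3 + deriv c x 0 * deriv c x 3)
            + (deriv (deriv c) x 1 * c x 2 + deriv c x 1 * deriv c x 2)
            - (deriv (deriv c) x 2 * c x 1 + deriv c x 2 * deriv c x 1)
            + (deriv (deriv c) x 3 * c x 0 + deriv c x 3 * deriv c x 0)) x :=
        (((((hda 0).mul (hca 3)).neg.add ((hda 1).mul (hca 2))).sub
          ((hda 2).mul (hca 1))).add ((hda 3).mul (hca 0)))
      have hGeq : -(deriv (deriv c) x 0 * c x 3 + deriv c x 0 * deriv c x 3)
            + (deriv (deriv c) x 1 * c x 2 + deriv c x 1 * deriv c x 2)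
            - (deriv (deriv c) x 2 * c x 1 + deriv c x 2 * deriv c x 1)
            + (deriv (deriv c) x 3 * c x 0 + deriv c x 3 * deriv c x 0) = 0 := by
        have h1 := (hG.hasDerivWithinAt).derivWithin (hud x hxJ)
        have h2 : derivWithin
            (fun u => -(deriv c u 0 * c u 3) + deriv c u 1 * c u 2
              - deriv c u 2 * c u 1 + deriv c u 3 * c u 0)
            (Icc a b) x = derivWithin (fun _ : ℝ => (0 : ℝ)) (Icc a b) x := by
          apply derivWithin_congr
          · intro y hy
            have := hhor y (hJI hy)
            simp [gammaC, ip, Yf] at this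
            show -(deriv c y 0 * c y 3) + deriv c y 1 * c y 2
              - deriv c y 2 * c y 1 + deriv c y 3 * c y 0 = 0
            linarith
          · have := hhor x hxI
            simp [gammaC, ip, Yf] at this
            linarith
        rw [h2, derivWithin_fun_const, Pi.zero_apply] at h1
        linarith [h1]
      have hip : -(c x 0 * c x 0) - c x 1 * c x 1 + c x 2 * c x 2 + c x 3 * c x 3 = -1 := by
        have := hH x hxI
        simpa [AdS, ip] using this
      rw [hEL1 x hxI, hEL2 x hxI, hEL3 x hxI, hEL4 x hxI] at hGeq
      linear_combination hGeq + lam x * hFeq + deriv lam x * hip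
    have hdo : DifferentiableOn ℝ lam (Icc a b) := fun x hx =>
      (hlam x (hJI hx)).differentiableWithinAt
    exact constant_of_derivWithin_zero hdo
      (fun x hx => by
        rw [(hlam x (hJI (Ico_subset_Icc_self hx))).derivWithin (hud x (Ico_subset_Icc_self hx))]
        exact hder0 x (Ico_subset_Icc_self hx))
      b (right_mem_Icc.2 hab.le)
  intro s hs t ht
  rcases lt_trichotomy s t with h | h | h
  · exact (key s t hs ht h).symm
  · rw [h]
  · exact key t s ht hs h
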